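/- Let n ≥ 2 and m ≥ 2 be integers with m ≤ (2/3)n, and let t : ℕ → ℕ with t_k = 0 unless 2 ≤ k ≤ m. Suppose n(n-1) = Σ_{k=2}^{m} k(k-1) t_k, f = 1 + Σ_{k=2}^{m} (k-1) t_k, and t₂ + (3/4)t₃ + Σ_{k=5}^{m} (k - k²/4) t_k ≥ n. Then f ≥ n²/6. -/

import Mathlib

theorem stmt5 (n m f : ℕ) (hn : 2 ≤ n) (hm : 2 ≤ m) (hmn : (m : ℝ) ≤ 2 / 3 * n)
    (t : ℕ → ℕ) (ht0 : ∀ k, ¬(2 ≤ k ∧ k ≤ m) → t k = 0)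
    (hpairs : (n : ℝ) * (n - 1) = ∑ k ∈ Finset.Icc 2 m, (k : ℝ) * (k - 1) * t k)
    (hf : (f : ℝ) = 1 + ∑ k ∈ Finset.Icc 2 m, ((k : ℝ) - 1) * t k)
    (hboj : (n : ℝ) ≤ t 2 + (3 / 4) * t 3
      + ∑ k ∈ Finset.Icc 5 m, ((k : ℝ) - (k : ℝ) ^ 2 / 4) * t k) :
    (n : ℝ) ^ 2 / 6 ≤ (f : ℝ) := by
  -- rewrite Bojanowski as a sum over Icc 2 m
  have key : (t 2 : ℝ) + (3 / 4) * t 3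
      + ∑ k ∈ Finset.Icc 5 m, ((k : ℝ) - (k : ℝ) ^ 2 / 4) * t k
      = ∑ k ∈ Finset.Icc 2 m, ((k : ℝ) - (k : ℝ) ^ 2 / 4) * t k := by
    set g : ℕ → ℝ := fun k => ((k : ℝ) - (k : ℝ) ^ 2 / 4) * t k with hg
    rcases le_or_gt 5 m with h5 | h5
    · have h1 : (∑ k ∈ Finset.Ioc 1 4, g k) + ∑ k ∈ Finset.Ioc 4 m, g k
          = ∑ k ∈ Finset.Ioc 1 m, g k :=
        Finset.sum_Ioc_consecutive g (by norm_num) (by omega)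
      have e1 : Finset.Icc 2 m = Finset.Ioc 1 m := rfl
      have e2 : Finset.Icc 5 m = Finset.Ioc 4 m := rfl
      have e3 : Finset.Ioc 1 4 = ({2, 3, 4} : Finset ℕ) := by decide
      rw [e1, e2, ← h1, e3]
      norm_num
      ring
    · interval_cases m
      · have h3 : t 3 = 0 := ht0 3 (by omega)
        have e : Finset.Icc 2 2 = ({2} : Finset ℕ) := by decide
        simp [e, h3, hg]
        norm_num
      · have e : Finset.Icc 2 3 = ({2, 3} : Finset ℕ) := by decide
        simp [e]
        ring
      · have e : Finset.Icc 2 4 = ({2, 3, 4} : Finset ℕ) := by decide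
        simp [e]
        ring
  rw [key] at hboj
  have hsum : ∑ k ∈ Finset.Icc 2 m, ((k : ℝ) / 2) * t k
      = (1 / 6) * ∑ k ∈ Finset.Icc 2 m, (k : ℝ) * (k - 1) * t k
        + (2 / 3) * ∑ k ∈ Finset.Icc 2 m, ((k : ℝ) - (k : ℝ) ^ 2 / 4) * t k := by
    rw [Finset.mul_sum, Finset.mul_sum, ← Finset.sum_add_distrib]
    exact Finset.sum_congr rfl fun k _ => by ring
  have hmono : ∑ k ∈ Finset.Icc 2 m, ((k : ℝ) / 2) * t k
      ≤ ∑ k ∈ Finset.Icc 2 m, ((k : ℝ) - 1) * t k := by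
    apply Finset.sum_le_sum
    intro k hk
    have hk2 : 2 ≤ k := (Finset.mem_Icc.mp hk).1
    have : (1 : ℝ) ≤ (k : ℝ) - 1 := by
      have : (2 : ℝ) ≤ (k : ℝ) := by exact_mod_cast hk2
      linarith
    have ht : (0 : ℝ) ≤ t k := Nat.cast_nonneg _
    nlinarith [Nat.cast_nonneg (α := ℝ) k]
  have hn' : (0 : ℝ) ≤ (n : ℝ) := Nat.cast_nonneg _
  nlinarith [hsum, hmono, hboj, hpairs, hf]
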